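/- Let X and S be symmetric positive definite n×n real matrices, and define W = S^{-1/2}(S^{1/2} X S^{1/2})^{1/2} S^{-1/2}. Then W is symmetric positive definite, W⁻¹ X W⁻¹ = S, and W is the unique symmetric positive definite matrix with this property. -/

import Mathlib

open Matrix
open scoped Classical

/-- The unique symmetric positive semidefinite square root of a positive semidefinite
real matrix (junk value `0` for matrices that are not positive semidefinite). -/
noncomputable def msqrt {n : ℕ} (A : Matrix (Fin n) (Fin n) ℝ) :
    Matrix (Fin n) (Fin n) ℝ :=
  if h : A.PosSemidef then
    (h.1.eigenvectorUnitary : Matrix (Fin n) (Fin n) ℝ) *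
      diagonal ((↑) ∘ Real.sqrt ∘ h.1.eigenvalues) *
      (star (h.1.eigenvectorUnitary : Matrix (Fin n) (Fin n) ℝ))
  else 0

private lemma msqrt_spec {n : ℕ} {A : Matrix (Fin n) (Fin n) ℝ} (h : A.PosSemidef) :
    (msqrt A).PosSemidef ∧ msqrt A * msqrt A = A := by
  rw [msqrt, dif_pos h]
  set U : Matrix (Fin n) (Fin n) ℝ := (h.1.eigenvectorUnitary : Matrix (Fin n) (Fin n) ℝ)
  have hUU : star U * U = 1 := Unitary.coe_star_mul_self _
  refine ⟨?_, ?_⟩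
  · have hd : (diagonal ((↑) ∘ Real.sqrt ∘ h.1.eigenvalues) :
        Matrix (Fin n) (Fin n) ℝ).PosSemidef := by
      rw [posSemidef_diagonal_iff]
      intro i
      simp [Real.sqrt_nonneg]
    exact hd.mul_mul_conjTranspose_same U
  · have hsp := h.1.spectral_theorem
    rw [Unitary.conjStarAlgAut_apply] at hsp
    calc U * diagonal ((↑) ∘ Real.sqrt ∘ h.1.eigenvalues) * star U *
          (U * diagonal ((↑) ∘ Real.sqrt ∘ h.1.eigenvalues) * star U)
        = U * diagonal ((↑) ∘ Real.sqrt ∘ h.1.eigenvalues) * (star U * U) *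
          diagonal ((↑) ∘ Real.sqrt ∘ h.1.eigenvalues) * star U := by noncomm_ring
      _ = U * (diagonal ((↑) ∘ Real.sqrt ∘ h.1.eigenvalues) *
          diagonal ((↑) ∘ Real.sqrt ∘ h.1.eigenvalues)) * star U := by
          rw [hUU, mul_one, mul_assoc U]
      _ = A := by
          rw [diagonal_mul_diagonal]; refine Eq.trans ?_ hsp.symm
          congr 3
          funext i
          simp [Real.mul_self_sqrt (h.eigenvalues_nonneg i)]

open scoped MatrixOrder in
private lemma psd_eq_of_sq {n : ℕ} {T Q : Matrix (Fin n) (Fin n) ℝ} (hT : T.PosSemidef)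
    (hQ : Q.PosSemidef) (h : T ^ 2 = Q ^ 2) : T = Q := by
  have h1 := CFC.sqrt_unique (a := Q * Q) (b := T) (by rw [← sq, ← sq, h]) hT.nonneg
  have h2 := CFC.sqrt_unique (a := Q * Q) (b := Q) rfl hQ.nonneg
  rw [← h1, h2]

private lemma posDef_of_posSemidef_isUnit {n : ℕ} {A : Matrix (Fin n) (Fin n) ℝ}
    (hA : A.PosSemidef) (h : IsUnit A) : A.PosDef := by
  exact hA.posDef_iff_isUnit.mpr h

private lemma posDef_conj {n : ℕ} {A : Matrix (Fin n) (Fin n) ℝ} (hA : A.PosDef)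
    {B : Matrix (Fin n) (Fin n) ℝ} (hB : IsUnit B) : (Bᴴ * A * B).PosDef := by
  exact hA.conjTranspose_mul_mul_same (Matrix.mulVec_injective_iff_isUnit.mpr hB)

/-- For symmetric positive definite `X` and `S`, the matrix
`W = S^{-1/2} (S^{1/2} X S^{1/2})^{1/2} S^{-1/2}` is symmetric positive definite,
satisfies `W⁻¹ X W⁻¹ = S`, and is the unique symmetric positive definite matrix with
this property (i.e. it is the Nesterov–Todd scaling point of `X` and `S`). -/
theorem statement1 (n : ℕ) (X S : Matrix (Fin n) (Fin n) ℝ)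
    (hX : X.PosDef) (hS : S.PosDef)
    (W : Matrix (Fin n) (Fin n) ℝ)
    (hW : W = (msqrt S)⁻¹ * msqrt (msqrt S * X * msqrt S) * (msqrt S)⁻¹) :
    (W.IsSymm ∧ W.PosDef) ∧ W⁻¹ * X * W⁻¹ = S ∧
      ∀ W' : Matrix (Fin n) (Fin n) ℝ, W'.IsSymm → W'.PosDef →
        W'⁻¹ * X * W'⁻¹ = S → W' = W := by
  have hSps := hS.posSemidef
  set R : Matrix (Fin n) (Fin n) ℝ := msqrt S with hRdef
  have hRps : R.PosSemidef := (msqrt_spec hSps).1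
  have hRR : R * R = S := (msqrt_spec hSps).2
  -- R is invertible
  have hRdetmul : R.det * R.det = S.det := by rw [← det_mul, hRR]
  have hRdet : IsUnit R.det := by
    refine isUnit_iff_ne_zero.mpr fun h => ?_
    rw [h, mul_zero] at hRdetmul
    exact hS.det_pos.ne' hRdetmul.symm
  have hRU : IsUnit R := (isUnit_iff_isUnit_det R).mpr hRdet
  have hRpd : R.PosDef := posDef_of_posSemidef_isUnit hRps hRU
  -- M = R X R is positive definite
  have hM : (R * X * R).PosDef := by
    have := posDef_conj hX hRU
    rwa [hRps.1] at this
  have hMps := hM.posSemidef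
  set Q : Matrix (Fin n) (Fin n) ℝ := msqrt (R * X * R) with hQdef
  have hQps : Q.PosSemidef := (msqrt_spec hMps).1
  have hQQ : Q * Q = R * X * R := (msqrt_spec hMps).2
  have hQdetmul : Q.det * Q.det = (R * X * R).det := by rw [← det_mul, hQQ]
  have hQdet : IsUnit Q.det := by
    refine isUnit_iff_ne_zero.mpr fun h => ?_
    rw [h, mul_zero] at hQdetmul
    exact hM.det_pos.ne' hQdetmul.symm
  have hQU : IsUnit Q := (isUnit_iff_isUnit_det Q).mpr hQdet
  have hQpd : Q.PosDef := posDef_of_posSemidef_isUnit hQps hQU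
  -- W is positive definite
  have hRinv : R⁻¹.PosDef := hRpd.inv
  have hWpd : W.PosDef := by
    rw [hW]
    have := posDef_conj hQpd hRinv.isUnit
    rwa [hRinv.1] at this
  have hWsymm : W.IsSymm := by
    rw [Matrix.IsSymm, ← Matrix.conjTranspose_eq_transpose_of_trivial, hWpd.1]
  -- inverse of W
  have hRiR : R⁻¹ * R = 1 := Matrix.nonsing_inv_mul R hRdet
  have hRRi : R * R⁻¹ = 1 := Matrix.mul_nonsing_inv R hRdet
  have hQiQ : Q⁻¹ * Q = 1 := Matrix.nonsing_inv_mul Q hQdet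
  have hQQi : Q * Q⁻¹ = 1 := Matrix.mul_nonsing_inv Q hQdet
  have hWval : W = R⁻¹ * Q * R⁻¹ := by rw [hW]
  have hWinv : W⁻¹ = R * Q⁻¹ * R := by
    rw [hWval]
    apply Matrix.inv_eq_left_inv
    calc R * Q⁻¹ * R * (R⁻¹ * Q * R⁻¹)
        = R * Q⁻¹ * (R * R⁻¹) * Q * R⁻¹ := by noncomm_ring
      _ = R * (Q⁻¹ * Q) * R⁻¹ := by rw [hRRi]; noncomm_ring
      _ = 1 := by rw [hQiQ, mul_one, hRRi]
  have hmain : W⁻¹ * X * W⁻¹ = S := by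
    calc W⁻¹ * X * W⁻¹ = R * Q⁻¹ * (R * X * R) * Q⁻¹ * R := by rw [hWinv]; noncomm_ring
      _ = R * Q⁻¹ * (Q * Q) * Q⁻¹ * R := by rw [hQQ]
      _ = R * (Q⁻¹ * Q) * (Q * Q⁻¹) * R := by noncomm_ring
      _ = S := by rw [hQiQ, hQQi, mul_one, mul_one, hRR]
  refine ⟨⟨hWsymm, hWpd⟩, hmain, fun W' hW'symm hW'pd hW' => ?_⟩
  -- uniqueness
  have hW'det : IsUnit W'.det := hW'pd.det_pos.ne'.isUnit
  have hW'iW : W'⁻¹ * W' = 1 := Matrix.nonsing_inv_mul W' hW'det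
  have hW'Wi : W' * W'⁻¹ = 1 := Matrix.mul_nonsing_inv W' hW'det
  have hXval : X = W' * S * W' := by
    calc X = (W' * W'⁻¹) * X * (W'⁻¹ * W') := by rw [hW'Wi, hW'iW, one_mul, mul_one]
      _ = W' * (W'⁻¹ * X * W'⁻¹) * W' := by noncomm_ring
      _ = W' * S * W' := by rw [hW']
  set T : Matrix (Fin n) (Fin n) ℝ := R * W' * R with hTdef
  have hTpd : T.PosDef := by
    have := posDef_conj hW'pd hRU
    rwa [hRps.1] at this
  have hTsq : T ^ 2 = Q ^ 2 := by
    rw [pow_two, pow_two, hQQ, hTdef, hXval, ← hRR]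
    noncomm_ring
  have hTQ : T = Q := psd_eq_of_sq hTpd.posSemidef hQps hTsq
  calc W' = (R⁻¹ * R) * W' * (R * R⁻¹) := by rw [hRiR, hRRi, one_mul, mul_one]
    _ = R⁻¹ * T * R⁻¹ := by rw [hTdef]; noncomm_ring
    _ = W := by rw [hTQ, hWval]
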